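/- Let $\beta_1, \ldots, \beta_k < 0$, $\alpha_n \to \infty$ with $n e^{\alpha_n \beta_1} \to \lambda \in (0, \infty)$. Then $\sum_{j=0}^{n} (j^2 - j) \binom{n}{j} e^{\alpha_n\beta_1 j + \sum_{p=2}^k \alpha_n \beta_p j^p / n^{p-1}} \to \lambda^2 e^{\lambda}$ as $n \to \infty$. -/

import Mathlib

open Real Filter Finset

open Topology

private lemma stmt14_sq_le (j : ℕ) : ((j : ℝ)) ^ 2 ≤ (4 : ℝ) ^ j := by
  have h1 : (j : ℝ) ≤ (2 : ℝ) ^ j := by exact_mod_cast (Nat.lt_two_pow_self (n := j)).le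
  calc ((j : ℝ)) ^ 2 ≤ ((2 : ℝ) ^ j) ^ 2 := by
        exact pow_le_pow_left₀ (by positivity) h1 2
    _ = (4 : ℝ) ^ j := by
        rw [← pow_mul, mul_comm, pow_mul]; norm_num

private lemma stmt14_summable {M : ℝ} (hM : 0 ≤ M) :
    Summable (fun j : ℕ => (j : ℝ) ^ 2 * M ^ j / j.factorial) := by
  refine Summable.of_nonneg_of_le (fun j => by positivity) (fun j => ?_)
    (Real.summable_pow_div_factorial (4 * M))
  have : (j : ℝ) ^ 2 * M ^ j ≤ (4 * M) ^ j := by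
    rw [mul_pow]
    exact mul_le_mul_of_nonneg_right (stmt14_sq_le j) (by positivity)
  exact div_le_div_of_nonneg_right this (by positivity) |>.trans_eq rfl

theorem stmt14 (k : ℕ) (hk : 1 ≤ k) (β : ℕ → ℝ)
    (hβ : ∀ p ∈ Finset.Icc 1 k, β p < 0)
    (α : ℕ → ℝ) (hα : Tendsto α atTop atTop)
    (lam : ℝ) (hlam : 0 < lam)
    (h : Tendsto (fun n : ℕ => (n : ℝ) * Real.exp (α n * β 1)) atTop (nhds lam)) :
    Tendsto (fun n : ℕ => ∑ j ∈ Finset.range (n + 1), ((j : ℝ) ^ 2 - j) * (n.choose j : ℝ) *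
        Real.exp (α n * β 1 * j +
          ∑ p ∈ Finset.Icc 2 k, α n * β p * (j : ℝ) ^ p / (n : ℝ) ^ (p - 1)))
      atTop (nhds (lam ^ 2 * Real.exp lam)) := by
  have hβ1 : β 1 < 0 := hβ 1 (Finset.mem_Icc.mpr ⟨le_refl 1, hk⟩)
  set x : ℕ → ℝ := fun n => Real.exp (α n * β 1) with hxdef
  have hx0 : ∀ n, 0 < x n := fun n => Real.exp_pos _
  set M : ℝ := lam + 1 with hMdef
  have hM0 : 0 < M := by positivity
  -- x n → 0
  have hx_to0 : Tendsto x atTop (𝓝 0) := by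
    have h1 : Tendsto (fun n : ℕ => ((n:ℝ) * x n) * (1 / n)) atTop (𝓝 (lam * 0)) :=
      h.mul tendsto_one_div_atTop_nhds_zero_nat
    rw [mul_zero] at h1
    refine Tendsto.congr' ?_ h1
    filter_upwards [eventually_ge_atTop 1] with n hn
    have hn0 : (0:ℝ) < n := by exact_mod_cast hn
    field_simp
  -- α n / n → 0
  have hαn : Tendsto (fun n : ℕ => α n / n) atTop (𝓝 0) := by
    have hL : Tendsto (fun n : ℕ => Real.log ((n:ℝ) * x n)) atTop (𝓝 (Real.log lam)) :=
      (Real.continuousAt_log hlam.ne').tendsto.comp h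
    have hlogn : Tendsto (fun n : ℕ => Real.log n / (n:ℝ)) atTop (𝓝 0) :=
      (Real.isLittleO_log_id_atTop.tendsto_div_nhds_zero).comp tendsto_natCast_atTop_atTop
    have hLn : Tendsto (fun n : ℕ => Real.log ((n:ℝ) * x n) / n) atTop (𝓝 0) := by
      have h2 := hL.mul tendsto_one_div_atTop_nhds_zero_nat
      rw [mul_zero] at h2
      simpa [mul_one_div, div_eq_mul_inv] using h2
    have key := (hLn.sub hlogn).div_const (β 1)
    rw [sub_zero, zero_div] at key
    refine Tendsto.congr' ?_ key
    filter_upwards [eventually_ge_atTop 1] with n hn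
    have hn0 : (0:ℝ) < n := by exact_mod_cast hn
    have hlog : Real.log ((n:ℝ) * x n) = Real.log n + α n * β 1 := by
      rw [Real.log_mul hn0.ne' (hx0 n).ne', hxdef, Real.log_exp]
    rw [hlog]
    have heq : (Real.log n + α n * β 1) / n - Real.log n / n = β 1 * (α n / n) := by ring
    rw [heq, mul_comm, mul_div_assoc, div_self hβ1.ne, mul_one]
  -- α n / n^(p-1) → 0 for p ≥ 2
  have hpow : ∀ p : ℕ, 2 ≤ p → Tendsto (fun n : ℕ => α n / (n:ℝ) ^ (p - 1)) atTop (𝓝 0) := by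
    intro p hp
    have habs : Tendsto (fun n : ℕ => |α n / (n:ℝ)|) atTop (𝓝 0) := by
      simpa using hαn.abs
    refine squeeze_zero_norm' ?_ habs
    filter_upwards [eventually_ge_atTop 1] with n hn
    have hn1 : (1:ℝ) ≤ n := by exact_mod_cast hn
    have hn0 : (0:ℝ) < n := by linarith
    have hle : (n:ℝ) ≤ (n:ℝ) ^ (p - 1) := le_self_pow₀ hn1 (by omega)
    rw [Real.norm_eq_abs, abs_div, abs_div,
      abs_of_nonneg (by positivity : (0:ℝ) ≤ (n:ℝ) ^ (p - 1)), abs_of_pos hn0]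
    gcongr
  -- the correction term tends to 0 for fixed j
  have hc : ∀ j : ℕ, Tendsto
      (fun n : ℕ => ∑ p ∈ Finset.Icc 2 k, α n * β p * (j:ℝ) ^ p / (n:ℝ) ^ (p - 1))
      atTop (𝓝 0) := by
    intro j
    have hterm : ∀ p ∈ Finset.Icc 2 k, Tendsto
        (fun n : ℕ => α n * β p * (j:ℝ) ^ p / (n:ℝ) ^ (p - 1)) atTop (𝓝 0) := by
      intro p hp
      have h2 : 2 ≤ p := (Finset.mem_Icc.mp hp).1
      have := (hpow p h2).mul_const (β p * (j:ℝ) ^ p)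
      rw [zero_mul] at this
      refine this.congr fun n => ?_
      ring
    have := tendsto_finset_sum (Finset.Icc 2 k) hterm
    simpa using this
  -- choose * x^j → lam^j / j!
  have hchoose : ∀ j : ℕ, Tendsto (fun n : ℕ => (n.choose j : ℝ) * x n ^ j) atTop
      (𝓝 (lam ^ j / j.factorial)) := by
    intro j
    have hfac : Tendsto (fun n : ℕ => (∏ i ∈ Finset.range j, (((n:ℝ) - i) * x n)) / j.factorial)
        atTop (𝓝 ((∏ _i ∈ Finset.range j, lam) / j.factorial)) := by
      refine Tendsto.div_const (tendsto_finset_prod _ (fun i _ => ?_)) _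
      have h2 : Tendsto (fun n : ℕ => (n:ℝ) * x n - (i:ℝ) * x n) atTop (𝓝 (lam - (i:ℝ) * 0)) :=
        h.sub (hx_to0.const_mul _)
      rw [mul_zero, sub_zero] at h2
      refine h2.congr fun n => ?_
      ring
    rw [Finset.prod_const, Finset.card_range] at hfac
    refine Tendsto.congr' ?_ hfac
    filter_upwards [eventually_ge_atTop j] with n hn
    have hd : ((n.descFactorial j : ℕ) : ℝ) = ∏ i ∈ Finset.range j, ((n:ℝ) - i) := by
      rw [Nat.descFactorial_eq_prod_range, Nat.cast_prod]
      refine Finset.prod_congr rfl fun i hi => ?_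
      have : i ≤ n := le_of_lt (lt_of_lt_of_le (Finset.mem_range.mp hi) hn)
      push_cast [Nat.cast_sub this]
      ring
    have hcd : (n.choose j : ℝ) * (j.factorial : ℝ) = ∏ i ∈ Finset.range j, ((n:ℝ) - i) := by
      rw [← hd, ← Nat.cast_mul]
      norm_cast
      rw [Nat.descFactorial_eq_factorial_mul_choose]
      ring
    have hfj : (j.factorial : ℝ) ≠ 0 := by exact_mod_cast j.factorial_ne_zero
    rw [Finset.prod_mul_distrib, Finset.prod_const, Finset.card_range, ← hcd]
    field_simp
  -- dominated convergence setup
  set f : ℕ → ℕ → ℝ := fun n j => if j ≤ n then ((j : ℝ) ^ 2 - j) * (n.choose j : ℝ) *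
      Real.exp (α n * β 1 * j +
        ∑ p ∈ Finset.Icc 2 k, α n * β p * (j : ℝ) ^ p / (n : ℝ) ^ (p - 1)) else 0 with hfdef
  set g : ℕ → ℝ := fun j => ((j : ℝ) ^ 2 - j) * lam ^ j / j.factorial with hgdef
  set bound : ℕ → ℝ := fun j => (j : ℝ) ^ 2 * M ^ j / j.factorial with hbdef
  have hb_sum : Summable bound := stmt14_summable hM0.le
  have hj2 : ∀ j : ℕ, (0:ℝ) ≤ (j:ℝ) ^ 2 - (j:ℝ) := by
    intro j
    have : (j:ℕ) ≤ j ^ 2 := Nat.le_self_pow two_ne_zero j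
    have h2 : (j:ℝ) ≤ (j:ℝ) ^ 2 := by exact_mod_cast this
    linarith
  -- pointwise limits
  have hab : ∀ j : ℕ, Tendsto (fun n => f n j) atTop (𝓝 (g j)) := by
    intro j
    have hexp : Tendsto (fun n : ℕ => Real.exp
        (∑ p ∈ Finset.Icc 2 k, α n * β p * (j:ℝ) ^ p / (n:ℝ) ^ (p - 1))) atTop (𝓝 1) := by
      have := (Real.continuous_exp.tendsto 0).comp (hc j)
      simpa [Function.comp_def] using this
    have hmain : Tendsto (fun n : ℕ => ((j:ℝ) ^ 2 - j) * ((n.choose j : ℝ) * x n ^ j) *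
        Real.exp (∑ p ∈ Finset.Icc 2 k, α n * β p * (j:ℝ) ^ p / (n:ℝ) ^ (p - 1)))
        atTop (𝓝 (((j:ℝ) ^ 2 - j) * (lam ^ j / j.factorial) * 1)) :=
      (tendsto_const_nhds.mul (hchoose j)).mul hexp
    have hgj : g j = ((j:ℝ) ^ 2 - j) * (lam ^ j / j.factorial) * 1 := by
      rw [hgdef]; ring
    rw [← hgj] at hmain
    refine Tendsto.congr' ?_ hmain
    filter_upwards [eventually_ge_atTop j] with n hn
    simp only [hfdef, if_pos hn]
    rw [Real.exp_add, mul_comm (α n * β 1) ((j:ℝ)), Real.exp_nat_mul]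
    ring
  -- uniform bound
  have h_bound : ∀ᶠ n in atTop, ∀ j, ‖f n j‖ ≤ bound j := by
    have hMlt : ∀ᶠ n : ℕ in atTop, (n:ℝ) * x n ≤ M := by
      refine (h.eventually (eventually_le_nhds ?_))
      rw [hMdef]; linarith
    filter_upwards [hα.eventually_ge_atTop 0, hMlt, eventually_ge_atTop 1] with n hα0 hMn hn1
    intro j
    have hbnd_nonneg : (0:ℝ) ≤ bound j := by rw [hbdef]; positivity
    by_cases hj : j ≤ n
    · simp only [hfdef, if_pos hj]
      have hn0 : (0:ℝ) ≤ (n:ℝ) := Nat.cast_nonneg n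
      have hcle : (∑ p ∈ Finset.Icc 2 k, α n * β p * (j:ℝ) ^ p / (n:ℝ) ^ (p - 1)) ≤ 0 := by
        apply Finset.sum_nonpos
        intro p hp
        obtain ⟨hp2, hpk⟩ := Finset.mem_Icc.mp hp
        have hβp : β p < 0 := hβ p (Finset.mem_Icc.mpr ⟨le_trans one_le_two hp2, hpk⟩)
        apply div_nonpos_of_nonpos_of_nonneg
        · exact mul_nonpos_of_nonpos_of_nonneg
            (mul_nonpos_of_nonneg_of_nonpos hα0 hβp.le) (by positivity)
        · positivity
      have hEeq : Real.exp (α n * β 1 * j +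
            ∑ p ∈ Finset.Icc 2 k, α n * β p * (j:ℝ) ^ p / (n:ℝ) ^ (p - 1)) ≤ x n ^ j := by
        rw [Real.exp_add, mul_comm (α n * β 1) ((j:ℝ)), Real.exp_nat_mul]
        exact mul_le_of_le_one_right (pow_nonneg (hx0 n).le j) (Real.exp_le_one_iff.mpr hcle)
      have hterm_nonneg : (0:ℝ) ≤ ((j:ℝ) ^ 2 - j) * (n.choose j : ℝ) *
          Real.exp (α n * β 1 * j +
            ∑ p ∈ Finset.Icc 2 k, α n * β p * (j:ℝ) ^ p / (n:ℝ) ^ (p - 1)) :=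
        mul_nonneg (mul_nonneg (hj2 j) (Nat.cast_nonneg _)) (Real.exp_pos _).le
      rw [Real.norm_eq_abs, abs_of_nonneg hterm_nonneg]
      have hC : (n.choose j : ℝ) ≤ (n:ℝ) ^ j / j.factorial := Nat.choose_le_pow_div j n
      calc ((j:ℝ) ^ 2 - j) * (n.choose j : ℝ) *
            Real.exp (α n * β 1 * j +
              ∑ p ∈ Finset.Icc 2 k, α n * β p * (j:ℝ) ^ p / (n:ℝ) ^ (p - 1))
          ≤ (j:ℝ) ^ 2 * ((n:ℝ) ^ j / j.factorial) * x n ^ j := by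
            apply mul_le_mul _ hEeq (Real.exp_pos _).le (by positivity)
            apply mul_le_mul _ hC (Nat.cast_nonneg _) (by positivity)
            nlinarith [Nat.cast_nonneg (α := ℝ) j]
        _ = (j:ℝ) ^ 2 * ((n:ℝ) * x n) ^ j / j.factorial := by
            rw [mul_pow]; ring
        _ ≤ bound j := by
            rw [hbdef]
            apply div_le_div_of_nonneg_right _ (by positivity)
            exact mul_le_mul_of_nonneg_left
              (pow_le_pow_left₀ (mul_nonneg hn0 (hx0 n).le) hMn j) (by positivity)
    · simp only [hfdef, if_neg hj, norm_zero]
      exact hbnd_nonneg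
  -- dominated convergence
  have hdom := tendsto_tsum_of_dominated_convergence hb_sum hab h_bound
  -- the finite sums equal the tsums
  have hsum_eq : ∀ n : ℕ, (∑ j ∈ Finset.range (n + 1), ((j : ℝ) ^ 2 - j) * (n.choose j : ℝ) *
      Real.exp (α n * β 1 * j +
        ∑ p ∈ Finset.Icc 2 k, α n * β p * (j : ℝ) ^ p / (n : ℝ) ^ (p - 1)))
      = ∑' j, f n j := by
    intro n
    rw [tsum_eq_sum (s := Finset.range (n + 1))
      (fun j hj => by simp only [hfdef]; rw [if_neg]; intro hle; exact hj (Finset.mem_range.mpr (Nat.lt_succ_of_le hle)))]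
    refine Finset.sum_congr rfl fun j hj => ?_
    simp only [hfdef]
    rw [if_pos (Nat.lt_succ_iff.mp (Finset.mem_range.mp hj))]
  -- compute the limit tsum
  have hg_sum : Summable g := by
    refine hb_sum.of_norm_bounded (fun j => ?_)
    rw [hgdef, hbdef, Real.norm_eq_abs,
      abs_of_nonneg (by exact div_nonneg (mul_nonneg (hj2 j) (by positivity)) (by positivity))]
    have hlM : lam ≤ M := by rw [hMdef]; linarith
    have h1 : (j:ℝ) ^ 2 - j ≤ (j:ℝ) ^ 2 := by
      have := Nat.cast_nonneg (α := ℝ) j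
      linarith
    have h2 : lam ^ j ≤ M ^ j := pow_le_pow_left₀ hlam.le hlM j
    apply div_le_div_of_nonneg_right _ (by positivity)
    exact mul_le_mul h1 h2 (by positivity) (by positivity)
  have htsum : (∑' j, g j) = lam ^ 2 * Real.exp lam := by
    have hg0 : g 0 = 0 := by simp [hgdef]
    have hg1 : g 1 = 0 := by simp [hgdef]
    have hshift : ∀ j : ℕ, g (j + 1 + 1) = lam ^ 2 * (lam ^ j / j.factorial) := by
      intro j
      have hfj : (j.factorial : ℝ) ≠ 0 := by exact_mod_cast j.factorial_ne_zero
      simp only [hgdef, Nat.factorial_succ]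
      push_cast
      field_simp
      ring
    rw [Summable.tsum_eq_zero_add hg_sum, hg0, zero_add,
      Summable.tsum_eq_zero_add ((summable_nat_add_iff 1).mpr hg_sum), hg1, zero_add]
    calc (∑' j, g (j + 1 + 1)) = ∑' j : ℕ, lam ^ 2 * (lam ^ j / j.factorial) :=
          tsum_congr hshift
      _ = lam ^ 2 * ∑' j : ℕ, (lam ^ j / j.factorial) := tsum_mul_left
      _ = lam ^ 2 * Real.exp lam := by
          rw [Real.exp_eq_exp_ℝ]
          rw [(NormedSpace.expSeries_div_hasSum_exp lam).tsum_eq]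
  rw [htsum] at hdom
  exact hdom.congr fun n => (hsum_eq n).symm
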